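/- If X and Y are both good sets of a graph G and X ∩ Y ≠ ∅, then X ∪ Y is a good set of G. -/

import Mathlib

open SimpleGraph

/-- Appending two paths whose supports meet only at the joint vertex gives a path. -/
private lemma append_isPath_of_disjoint {V : Type*} {G : SimpleGraph V} {u v w : V}
    {p : G.Walk u v} {q : G.Walk v w} (hp : p.IsPath) (hq : q.IsPath)
    (h : ∀ x, x ∈ p.support → x ∈ q.support → x = v) : (p.append q).IsPath := by
  rw [Walk.isPath_def, Walk.support_append]
  apply List.Nodup.append hp.support_nodup
  · have := hq.support_nodup
    rw [q.support_eq_cons] at this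
    exact this.of_cons
  · intro x hxp hxq
    have hxv : x = v := h x hxp (by rw [q.support_eq_cons]; exact List.mem_cons_of_mem _ hxq)
    subst hxv
    have := hq.support_nodup
    rw [q.support_eq_cons] at this
    exact (List.nodup_cons.mp this).1 hxq

/-- From a path ending at a vertex satisfying `S`, extract an initial segment that is a path
ending at the first vertex satisfying `S`. -/
private lemma exists_firstHit {W : Type*} {H : SimpleGraph W} (S : W → Prop) :
    ∀ {u w : W} (p : H.Walk u w), p.IsPath → S w →
      ∃ z : W, S z ∧ ∃ q : H.Walk u z, q.IsPath ∧
        (∀ x ∈ q.support, x ≠ z → ¬ S x) ∧ q.support ⊆ p.support := by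
  intro u w p
  induction p with
  | nil =>
    intro _ hw
    refine ⟨_, hw, Walk.nil, Walk.IsPath.nil, ?_, fun x hx => hx⟩
    intro x hx hne
    simp only [Walk.support_nil, List.mem_singleton] at hx
    exact absurd hx hne
  | @cons a b c hab p ih =>
    intro hp hw
    by_cases hSa : S a
    · refine ⟨a, hSa, Walk.nil, Walk.IsPath.nil, ?_, ?_⟩
      · intro x hx hne
        simp only [Walk.support_nil, List.mem_singleton] at hx
        exact absurd hx hne
      · intro x hx
        simp only [Walk.support_nil, List.mem_singleton] at hx
        subst hx
        exact Walk.start_mem_support _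
    · obtain ⟨z, hSz, q, hq, hqS, hqsub⟩ := ih hp.of_cons hw
      have hanotin : a ∉ q.support := fun hmem =>
        ((Walk.cons_isPath_iff hab p).mp hp).2 (hqsub hmem)
      refine ⟨z, hSz, Walk.cons hab q, hq.cons hanotin, ?_, ?_⟩
      · intro x hx hne
        rw [Walk.support_cons] at hx
        rcases List.mem_cons.mp hx with hx | hx
        · subst hx; exact hSa
        · exact hqS x hx hne
      · intro x hx
        rw [Walk.support_cons] at hx ⊢
        rcases List.mem_cons.mp hx with hx | hx
        · subst hx; exact List.mem_cons_self
        · exact List.mem_cons_of_mem _ (hqsub hx)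

section

variable {V : Type*} {G : SimpleGraph V} {X Y : Set V}

/-- The inclusion homomorphism between induced subgraphs. -/
private def incHom (h : X ⊆ Y) : (G.induce X) →g (G.induce Y) where
  toFun x := ⟨x.1, h x.2⟩
  map_rel' := fun hadj => hadj

private lemma incHom_injective (h : X ⊆ Y) : Function.Injective (incHom (G := G) h) := by
  intro a b hab
  have h' : (⟨a.1, h a.2⟩ : {x // x ∈ Y}) = ⟨b.1, h b.2⟩ := hab
  injection h' with h''
  exact Subtype.ext h'' 

end

/-- `X ⊆ V(G)` is good (w.r.t. `k`) if every vertex of `X` lies on a cycle of length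
at least `k/2` in `G[X]`, and any two distinct vertices of `X` are joined by a path
of length at least `k/2` in `G[X]`. -/
def Good {V : Type*} (G : SimpleGraph V) (k : ℕ) (X : Set V) : Prop :=
  (∀ u : X, ∃ c : (G.induce X).Walk u u, c.IsCycle ∧ k ≤ 2 * c.length) ∧
  (∀ u v : X, u ≠ v → ∃ p : (G.induce X).Walk u v, p.IsPath ∧ k ≤ 2 * p.length)

/-- The cross case: `u ∈ X \ Y`, `v ∈ Y \ X`. -/
private lemma cross_case {V : Type*} (G : SimpleGraph V) (k : ℕ) (X Y : Set V)
    (hX : Good G k X) (hY : Good G k Y) (w0 : V) (hw0X : w0 ∈ X) (hw0Y : w0 ∈ Y)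
    (u v : ↥(X ∪ Y)) (huX : u.1 ∈ X) (huY : u.1 ∉ Y) (hvY : v.1 ∈ Y) (hvX : v.1 ∉ X) :
    ∃ p : (G.induce (X ∪ Y)).Walk u v, p.IsPath ∧ k ≤ 2 * p.length := by
  classical
  -- a path in G[X] from u to w0
  have hne : (⟨u.1, huX⟩ : X) ≠ ⟨w0, hw0X⟩ := by
    intro h
    exact huY (by rw [Subtype.ext_iff] at h; simp only at h; rw [h]; exact hw0Y)
  obtain ⟨P, hP, -⟩ := hX.2 ⟨u.1, huX⟩ ⟨w0, hw0X⟩ hne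
  -- first vertex of P lying in Y
  obtain ⟨z, hzY, q, hq, hqS, -⟩ :=
    exists_firstHit (fun x : X => (x : V) ∈ Y) P hP hw0Y
  -- a long path in G[Y] from z to v
  have hzv : (⟨(z : V), hzY⟩ : Y) ≠ ⟨v.1, hvY⟩ := by
    intro h
    rw [Subtype.ext_iff] at h
    exact hvX (h ▸ z.2)
  obtain ⟨R, hR, hRlen⟩ := hY.2 ⟨(z : V), hzY⟩ ⟨v.1, hvY⟩ hzv
  -- map both into G[X ∪ Y]
  have hXsub : X ⊆ X ∪ Y := Set.subset_union_left
  have hYsub : Y ⊆ X ∪ Y := Set.subset_union_right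
  let q' : (G.induce (X ∪ Y)).Walk u ⟨(z : V), hXsub z.2⟩ :=
    (q.map (incHom hXsub)).copy (Subtype.ext rfl) rfl
  let R' : (G.induce (X ∪ Y)).Walk ⟨(z : V), hXsub z.2⟩ v :=
    (R.map (incHom hYsub)).copy (Subtype.ext rfl) (Subtype.ext rfl)
  have hq' : q'.IsPath := by
    simp only [q']; erw [Walk.isPath_copy]
    exact q.map_isPath_of_injective (incHom_injective hXsub) hq
  have hR' : R'.IsPath := by
    simpa [R', Walk.isPath_copy] using R.map_isPath_of_injective (incHom_injective hYsub) hR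
  refine ⟨q'.append R', append_isPath_of_disjoint hq' hR' ?_, ?_⟩
  · intro x hxq hxR
    simp only [q', R'] at hxq hxR
    erw [Walk.support_copy] at hxq hxR
    simp only [Walk.support_map, List.mem_map] at hxq hxR
    obtain ⟨a, haq, rfl⟩ := hxq
    obtain ⟨b, hbR, hab⟩ := hxR
    have hx_in_Y : (a : V) ∈ Y := by
      have h' : (⟨b.1, hYsub b.2⟩ : {x // x ∈ X ∪ Y}) = ⟨a.1, hXsub a.2⟩ := hab
      injection h' with h''
      rw [← h'']; exact b.2
    have haz : a = z := by
      by_contra hne'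
      exact hqS a haq hne' hx_in_Y
    subst haz
    exact Subtype.ext rfl
  · rw [Walk.length_append]
    have : R'.length = R.length := by simp [R', Walk.length_copy, Walk.length_map]
    omega

/-- If `X` and `Y` are good sets with nonempty intersection, then `X ∪ Y` is good. -/
theorem stmt_2 {V : Type*} (G : SimpleGraph V) (k : ℕ) (X Y : Set V)
    (hX : Good G k X) (hY : Good G k Y) (hXY : (X ∩ Y).Nonempty) :
    Good G k (X ∪ Y) := by
  classical
  obtain ⟨w0, hw0X, hw0Y⟩ := hXY
  have hXsub : X ⊆ X ∪ Y := Set.subset_union_left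
  have hYsub : Y ⊆ X ∪ Y := Set.subset_union_right
  constructor
  · rintro ⟨u, hu⟩
    rcases hu with huX | huY
    · obtain ⟨c, hc, hlen⟩ := hX.1 ⟨u, huX⟩
      refine ⟨(c.map (incHom hXsub)).copy (Subtype.ext rfl) (Subtype.ext rfl), ?_, ?_⟩
      · rw [Walk.isCycle_copy]
        exact hc.map (incHom_injective hXsub)
      · simpa [Walk.length_copy, Walk.length_map] using hlen
    · obtain ⟨c, hc, hlen⟩ := hY.1 ⟨u, huY⟩
      refine ⟨(c.map (incHom hYsub)).copy (Subtype.ext rfl) (Subtype.ext rfl), ?_, ?_⟩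
      · rw [Walk.isCycle_copy]
        exact hc.map (incHom_injective hYsub)
      · simpa [Walk.length_copy, Walk.length_map] using hlen
  · rintro ⟨u, hu⟩ ⟨v, hv⟩ huv
    have huv' : u ≠ v := fun h => huv (Subtype.ext h)
    by_cases huX : u ∈ X <;> by_cases hvX : v ∈ X
    · -- both in X
      obtain ⟨p, hp, hlen⟩ := hX.2 ⟨u, huX⟩ ⟨v, hvX⟩ (fun h => huv' (congrArg Subtype.val h))
      refine ⟨(p.map (incHom hXsub)).copy (Subtype.ext rfl) (Subtype.ext rfl), ?_, ?_⟩
      · rw [Walk.isPath_copy]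
        exact p.map_isPath_of_injective (incHom_injective hXsub) hp
      · simpa [Walk.length_copy, Walk.length_map] using hlen
    · -- u ∈ X, v ∉ X, so v ∈ Y
      have hvY : v ∈ Y := hv.resolve_left hvX
      by_cases huY : u ∈ Y
      · -- both in Y
        obtain ⟨p, hp, hlen⟩ := hY.2 ⟨u, huY⟩ ⟨v, hvY⟩ (fun h => huv' (congrArg Subtype.val h))
        refine ⟨(p.map (incHom hYsub)).copy (Subtype.ext rfl) (Subtype.ext rfl), ?_, ?_⟩
        · rw [Walk.isPath_copy]
          exact p.map_isPath_of_injective (incHom_injective hYsub) hp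
        · simpa [Walk.length_copy, Walk.length_map] using hlen
      · exact cross_case G k X Y hX hY w0 hw0X hw0Y ⟨u, hu⟩ ⟨v, hv⟩ huX huY hvY hvX
    · -- u ∉ X so u ∈ Y ; v ∈ X
      have huY : u ∈ Y := hu.resolve_left huX
      by_cases hvY : v ∈ Y
      · -- both in Y
        obtain ⟨p, hp, hlen⟩ := hY.2 ⟨u, huY⟩ ⟨v, hvY⟩ (fun h => huv' (congrArg Subtype.val h))
        refine ⟨(p.map (incHom hYsub)).copy (Subtype.ext rfl) (Subtype.ext rfl), ?_, ?_⟩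
        · rw [Walk.isPath_copy]
          exact p.map_isPath_of_injective (incHom_injective hYsub) hp
        · simpa [Walk.length_copy, Walk.length_map] using hlen
      · -- cross case with roles swapped; reverse the path
        obtain ⟨p, hp, hlen⟩ :=
          cross_case G k X Y hX hY w0 hw0X hw0Y ⟨v, hv⟩ ⟨u, hu⟩ hvX hvY huY huX
        exact ⟨p.reverse, hp.reverse, by rwa [Walk.length_reverse]⟩
    · -- both in Y
      have huY : u ∈ Y := hu.resolve_left huX
      have hvY : v ∈ Y := hv.resolve_left hvX
      obtain ⟨p, hp, hlen⟩ := hY.2 ⟨u, huY⟩ ⟨v, hvY⟩ (fun h => huv' (congrArg Subtype.val h))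
      refine ⟨(p.map (incHom hYsub)).copy (Subtype.ext rfl) (Subtype.ext rfl), ?_, ?_⟩
      · rw [Walk.isPath_copy]
        exact p.map_isPath_of_injective (incHom_injective hYsub) hp
      · simpa [Walk.length_copy, Walk.length_map] using hlen
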